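/- Every subcubic graph G with maximum average degree less than 2 has star chromatic index at most 4. -/

import Mathlib

open SimpleGraph

/-- A star edge-coloring with `k` colors: a proper edge-coloring such that no
path or cycle with four edges is bicolored. -/
def IsStarEdgeColoring {V : Type*} {k : ℕ} (G : SimpleGraph V) (c : Sym2 V → Fin k) : Prop :=
  (∀ ⦃e f : Sym2 V⦄, e ∈ G.edgeSet → f ∈ G.edgeSet → e ≠ f →
      (∃ v, v ∈ e ∧ v ∈ f) → c e ≠ c f) ∧
  (∀ v0 v1 v2 v3 v4 : V, G.Adj v0 v1 → G.Adj v1 v2 → G.Adj v2 v3 → G.Adj v3 v4 →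
      v0 ≠ v2 → v0 ≠ v3 → v1 ≠ v3 → v1 ≠ v4 → v2 ≠ v4 →
      ¬ (c s(v0, v1) = c s(v2, v3) ∧ c s(v1, v2) = c s(v3, v4)))

/-- The star chromatic index: the least `k` admitting a star `k`-edge-coloring. -/
noncomputable def starChromaticIndex {V : Type*} (G : SimpleGraph V) : ℕ :=
  sInf {k | ∃ c : Sym2 V → Fin k, IsStarEdgeColoring G c}

/-! ### The finite coloring automaton -/

abbrev MSt : Type := ℕ × Option ℕ × List ℕ × Bool × List ℕ

def mfp (b : Option ℕ) (S : List ℕ) (c : ℕ) : Bool := b == some c || S.contains c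

def pairOf (s : MSt) : ℕ × ℕ :=
  let a := s.1; let b := s.2.1; let fl := s.2.2.2.1; let cl := s.2.2.2.2
  let badc : ℕ → Bool := fun c => c == a || (fl && b == some c) || cl.contains c
  let avail := ([0,1,2,3] : List ℕ).filter (fun c => !badc c)
  let o := avail.filter (fun c => !mfp b s.2.2.1 c) ++ avail.filter (fun c => mfp b s.2.2.1 c)
  (o.getD 0 0, o.getD 1 0)

def childSt (s : MSt) (j two : Bool) : MSt :=
  let a := s.1; let b := s.2.1; let S := s.2.2.1
  let x0 := (pairOf s).1; let x1 := (pairOf s).2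
  if j then (x1, some a, [x0], mfp b S x1, if mfp b S x1 then [] else [x0])
  else (x0, some a, if two then [x1] else [], mfp b S x0,
        if two && mfp b S x1 then [x1] else [])

def rootSt (k r : ℕ) : MSt :=
  (r, none, (List.range k).filter (fun x => x ≠ r), false, if 2 ≤ k then [(r+1)%k] else [])

def kids (s : MSt) : List MSt :=
  [childSt s false false, childSt s false true, childSt s true true]
def R : List MSt := [
  (0, some 1, [], false, []),
  (0, some 1, [2], false, []),
  (0, some 1, [2], false, [2]),
  (0, some 1, [2], true, []),
  (0, some 1, [3], false, []),
  (0, some 1, [3], false, [3]),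
  (0, some 1, [3], true, []),
  (0, some 2, [], false, []),
  (0, some 2, [1], false, []),
  (0, some 2, [1], false, [1]),
  (0, some 2, [1], true, []),
  (0, some 2, [3], false, []),
  (0, some 2, [3], false, [3]),
  (0, some 2, [3], true, []),
  (0, some 3, [], false, []),
  (0, some 3, [1], false, []),
  (0, some 3, [1], false, [1]),
  (0, some 3, [1], true, []),
  (0, some 3, [2], false, []),
  (0, some 3, [2], false, [2]),
  (0, some 3, [2], true, []),
  (0, none, [], false, []),
  (0, none, [1, 2], false, [1]),
  (0, none, [1], false, [1]),
  (1, some 0, [], false, []),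
  (1, some 0, [2], false, []),
  (1, some 0, [2], false, [2]),
  (1, some 0, [2], true, []),
  (1, some 0, [3], false, []),
  (1, some 0, [3], false, [3]),
  (1, some 0, [3], true, []),
  (1, some 2, [], false, []),
  (1, some 2, [0], false, [0]),
  (1, some 2, [0], true, []),
  (1, some 2, [3], false, []),
  (1, some 2, [3], false, [3]),
  (1, some 2, [3], true, []),
  (1, some 3, [], false, []),
  (1, some 3, [0], false, [0]),
  (1, some 3, [0], true, []),
  (1, some 3, [2], false, []),
  (1, some 3, [2], false, [2]),
  (1, some 3, [2], true, []),
  (1, none, [0, 2], false, [2]),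
  (1, none, [0], false, [0]),
  (2, some 0, [], false, []),
  (2, some 0, [1], false, [1]),
  (2, some 0, [1], true, []),
  (2, some 0, [3], false, []),
  (2, some 0, [3], false, [3]),
  (2, some 0, [3], true, []),
  (2, some 1, [], false, []),
  (2, some 1, [0], false, [0]),
  (2, some 1, [0], true, []),
  (2, some 1, [3], false, []),
  (2, some 1, [3], false, [3]),
  (2, some 1, [3], true, []),
  (2, some 3, [], false, []),
  (2, some 3, [0], false, [0]),
  (2, some 3, [0], true, []),
  (2, some 3, [1], false, [1]),
  (2, some 3, [1], true, []),
  (2, none, [0, 1], false, [0]),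
  (3, some 0, [], false, []),
  (3, some 0, [1], false, [1]),
  (3, some 0, [1], true, []),
  (3, some 0, [2], false, [2]),
  (3, some 0, [2], true, []),
  (3, some 1, [], false, []),
  (3, some 1, [0], false, [0]),
  (3, some 1, [0], true, []),
  (3, some 1, [2], false, [2]),
  (3, some 1, [2], true, []),
  (3, some 2, [], false, []),
  (3, some 2, [0], false, [0]),
  (3, some 2, [0], true, []),
  (3, some 2, [1], false, [1]),
  (3, some 2, [1], true, [])]

def peaksInt (s : MSt) : List (MSt × MSt) :=
  [(childSt s false true, childSt s true true), (childSt s true true, childSt s false true)]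

def peaksRoot : List (MSt × MSt) :=
  (List.range 3).flatMap (fun k =>
    (List.range (k+1)).flatMap (fun r1 =>
      (List.range (k+1)).filterMap (fun r2 =>
        if r1 ≠ r2 then some (rootSt (k+1) r1, rootSt (k+1) r2) else none)))

def shapeBCok (p : MSt × MSt) : Bool :=
  let sx := p.1; let sy := p.2
  ((kids sx).all fun cx => (kids sy).all fun cy => !(cx.1 == sy.1 && cy.1 == sx.1)) &&
  ((kids sy).all fun sz => (kids sz).all fun sw => !(sz.1 == sx.1 && sw.1 == sy.1))

theorem machine_closure : ∀ s ∈ R, ∀ t ∈ kids s, t ∈ R := by decide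

theorem machine_roots : ∀ k ∈ List.range 3, ∀ r ∈ List.range (k+1), rootSt (k+1) r ∈ R := by
  decide

theorem machine_proper : ∀ s ∈ R, (pairOf s).1 ≠ (pairOf s).2 ∧ (pairOf s).1 ≠ s.1 ∧
    (pairOf s).2 ≠ s.1 ∧ (pairOf s).1 < 4 ∧ (pairOf s).2 < 4 ∧ s.1 < 4 := by decide

theorem machine_shapeA : ∀ s0 ∈ R, ∀ s1 ∈ kids s0, ∀ s2 ∈ kids s1, ∀ s3 ∈ kids s2,
    ¬(s2.1 = s0.1 ∧ s3.1 = s1.1) := by decide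

theorem machine_peaksInt : ∀ s ∈ R, ∀ p ∈ peaksInt s, shapeBCok p = true := by decide

theorem machine_peaksRoot : ∀ p ∈ peaksRoot, shapeBCok p = true := by decide

theorem shapeBCok_c {sx sy cx cy : MSt} (h : shapeBCok (sx, sy) = true)
    (hx : cx ∈ kids sx) (hy : cy ∈ kids sy) : ¬(cx.1 = sy.1 ∧ cy.1 = sx.1) := by
  rintro ⟨h1, h2⟩
  simp only [shapeBCok, Bool.and_eq_true, List.all_eq_true] at h
  have := h.1 cx hx cy hy
  simp [h1, h2] at this

theorem shapeBCok_b {sx sy sz sw : MSt} (h : shapeBCok (sx, sy) = true)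
    (hz : sz ∈ kids sy) (hw : sw ∈ kids sz) : ¬(sz.1 = sx.1 ∧ sw.1 = sy.1) := by
  rintro ⟨h1, h2⟩
  simp only [shapeBCok, Bool.and_eq_true, List.all_eq_true] at h
  have := h.2 sz hz sw hw
  simp [h1, h2] at this

theorem machine_kids_ne : ∀ s ∈ R, ∀ t ∈ kids s, t.1 ≠ s.1 ∧ t.1 < 4 := by decide
section Graph
variable {V : Type*} [Fintype V] (G : SimpleGraph V)

theorem acyclic_of_mad (hmad : ∀ H : G.Subgraph, H.verts.Nonempty →
    (2 * H.edgeSet.ncard : ℚ) / H.verts.ncard < 2) : G.IsAcyclic := by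
  intro v w hw
  classical
  have hL3 : 3 ≤ w.length := hw.three_le_length
  set H := w.toSubgraph with hH
  have hv : v ∈ H.verts := w.start_mem_verts_toSubgraph
  -- edge count
  have hEset : H.edgeSet = ↑w.edges.toFinset := by
    rw [hH, SimpleGraph.Walk.edgeSet_toSubgraph]
    ext e; simp
  have hE : H.edgeSet.ncard = w.length := by
    rw [hEset, Set.ncard_coe_finset, List.toFinset_card_of_nodup hw.edges_nodup,
      SimpleGraph.Walk.length_edges]
  -- vertex count bound
  have hVsub : H.verts ⊆ ↑w.support.tail.toFinset := by
    intro u hu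
    rw [hH, SimpleGraph.Walk.mem_verts_toSubgraph] at hu
    cases w with
    | nil => simp at hL3
    | cons h q =>
      simp only [SimpleGraph.Walk.support_cons, List.tail_cons] at hu ⊢
      rcases List.mem_cons.mp hu with rfl | hu
      · simp only [List.coe_toFinset, Set.mem_setOf_eq]
        exact q.end_mem_support
      · simpa using hu
  have hV : H.verts.ncard ≤ w.length := by
    calc H.verts.ncard ≤ (↑w.support.tail.toFinset : Set V).ncard :=
          Set.ncard_le_ncard hVsub (Set.toFinite _)
      _ = w.support.tail.toFinset.card := Set.ncard_coe_finset _
      _ ≤ w.support.tail.length := List.toFinset_card_le _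
      _ = w.length := by simp [List.length_tail, SimpleGraph.Walk.length_support]
  have hVpos : 0 < H.verts.ncard := by
    rw [Set.ncard_pos (Set.toFinite _)]
    exact ⟨v, hv⟩
  have := hmad H ⟨v, hv⟩
  rw [div_lt_iff₀ (by exact_mod_cast hVpos)] at this
  rw [hE] at this
  have : (2 * w.length : ℚ) < 2 * H.verts.ncard := by linarith
  have h2 : (w.length : ℚ) < H.verts.ncard := by linarith
  have : (H.verts.ncard : ℚ) ≤ w.length := by exact_mod_cast hV
  linarith

end Graph
section Rooting
variable {V : Type*} [Fintype V] (G : SimpleGraph V)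
set_option linter.unusedSectionVars false

noncomputable def groot (v : V) : V := (G.connectedComponentMk v).out

lemma comp_groot (v : V) : G.connectedComponentMk (groot G v) = G.connectedComponentMk v :=
  Quot.out_eq _

lemma reach_groot (v : V) : G.Reachable v (groot G v) :=
  (SimpleGraph.ConnectedComponent.eq.mp (comp_groot G v)).symm

noncomputable def gpath (v : V) : G.Path v (groot G v) :=
  letI := Classical.decEq V
  ((reach_groot G v).some).toPath

noncomputable def gdepth (v : V) : ℕ := (gpath G v).1.length

noncomputable def gpar (v : V) : V := (gpath G v).1.getVert 1

lemma groot_adj {a b : V} (h : G.Adj a b) : groot G a = groot G b :=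
  congrArg Quot.out (SimpleGraph.ConnectedComponent.connectedComponentMk_eq_of_adj h)

lemma gdepth_eq_zero {v : V} : gdepth G v = 0 ↔ v = groot G v := by
  constructor
  · intro h0
    exact SimpleGraph.Walk.eq_of_length_eq_zero h0
  · intro h
    have hnil := (SimpleGraph.Walk.isPath_iff_eq_nil (p := (gpath G v).1.copy rfl h.symm)).mp
      ((SimpleGraph.Walk.isPath_copy _ _ _).mpr (gpath G v).2)
    have : ((gpath G v).1.copy rfl h.symm).length = 0 := by rw [hnil]; rfl
    simpa [gdepth] using this

lemma gpar_of_root {v : V} (h : v = groot G v) : gpar G v = v := by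
  have h0 : (gpath G v).1.length = 0 := (gdepth_eq_zero G).mpr h
  have := (gpath G v).1.getVert_of_length_le (by omega : (gpath G v).1.length ≤ 1)
  rw [gpar, this, ← h]

lemma walk_head_spec {x y : V} (W : G.Walk x y) (hW : W.IsPath) (hxy : x ≠ y) :
    G.Adj x (W.getVert 1) ∧ W.getVert 1 ≠ x ∧
      ∃ q : G.Walk (W.getVert 1) y, q.IsPath ∧ q.length + 1 = W.length := by
  cases W with
  | nil => exact absurd rfl hxy
  | @cons _ b _ ha q =>
    have hg : (SimpleGraph.Walk.cons ha q).getVert 1 = b := by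
      rw [SimpleGraph.Walk.getVert_cons_succ, SimpleGraph.Walk.getVert_zero]
    rw [hg]
    have hsup := hW.support_nodup
    rw [SimpleGraph.Walk.support_cons] at hsup
    have hbx : b ≠ x := by
      rintro rfl
      exact (List.nodup_cons.mp hsup).1 q.start_mem_support
    exact ⟨ha, hbx, q, hW.of_cons, by simp⟩

lemma gpar_spec (hac : G.IsAcyclic) {v : V} (h : v ≠ groot G v) :
    G.Adj v (gpar G v) ∧ gpar G v ≠ v ∧ gdepth G (gpar G v) + 1 = gdepth G v := by
  obtain ⟨hadj, hne, q, hq, hlen⟩ := walk_head_spec G (gpath G v).1 (gpath G v).2 h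
  refine ⟨hadj, hne, ?_⟩
  have hroot : groot G (gpar G v) = groot G v := (groot_adj G hadj).symm
  have hq' : (q.copy rfl hroot.symm).IsPath := (SimpleGraph.Walk.isPath_copy _ _ _).mpr hq
  have hu : gpath G (gpar G v) = ⟨q.copy rfl hroot.symm, hq'⟩ := hac.path_unique _ _
  have : gdepth G (gpar G v) = q.length := by
    rw [gdepth, hu]
    exact SimpleGraph.Walk.length_copy q rfl hroot.symm
  rw [this]
  exact hlen

lemma gpar_ne {v : V} (h : v ≠ groot G v) : gpar G v ≠ v :=
  (walk_head_spec G (gpath G v).1 (gpath G v).2 h).2.1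

end Rooting
section Orient
variable {V : Type*} [Fintype V] (G : SimpleGraph V)
set_option linter.unusedSectionVars false

lemma nonroot_of_gpar {v u : V} (h : gpar G v = u) (hne : v ≠ u) : v ≠ groot G v := by
  intro hroot
  rw [gpar_of_root G hroot] at h
  exact hne h

lemma orient (hac : G.IsAcyclic) {a b : V} (h : G.Adj a b) :
    gpar G a = b ∨ gpar G b = a := by
  classical
  by_cases h1 : gpar G a = b
  · exact Or.inl h1
  right
  set W := (gpath G a).1 with hWdef
  have hW : W.IsPath := (gpath G a).2
  -- b is not in the support of W
  have hbW : b ∉ W.support := by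
    intro hb
    have hQpath : (W.takeUntil b hb).IsPath := hW.takeUntil hb
    have hQeq : (⟨W.takeUntil b hb, hQpath⟩ : G.Path a b) = SimpleGraph.Path.singleton h :=
      hac.path_unique _ _
    have hQlen : (W.takeUntil b hb).length = 1 := by
      have := congrArg (fun p : G.Path a b => (p : G.Walk a b).length) hQeq
      simpa [SimpleGraph.Path.singleton] using this
    have htake := W.take_spec hb
    have : W.getVert 1 = b := by
      rw [← htake, SimpleGraph.Walk.getVert_append, hQlen]
      simp
    exact h1 this
  have hcons : (SimpleGraph.Walk.cons h.symm W).IsPath :=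
    (SimpleGraph.Walk.cons_isPath_iff _ _).mpr ⟨hW, hbW⟩
  have hroot : groot G b = groot G a := groot_adj G h.symm
  have hq' : ((SimpleGraph.Walk.cons h.symm W).copy rfl hroot.symm).IsPath :=
    (SimpleGraph.Walk.isPath_copy _ _ _).mpr hcons
  have hu : gpath G b = ⟨(SimpleGraph.Walk.cons h.symm W).copy rfl hroot.symm, hq'⟩ :=
    hac.path_unique _ _
  have : gpar G b = ((SimpleGraph.Walk.cons h.symm W).copy rfl hroot.symm).getVert 1 := by
    rw [gpar, hu]
  rw [this]
  have : ((SimpleGraph.Walk.cons h.symm W).copy rfl hroot.symm).getVert 1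
      = (SimpleGraph.Walk.cons h.symm W).getVert 1 := by
    simp [SimpleGraph.Walk.getVert_copy]
  rw [this, SimpleGraph.Walk.getVert_cons_succ, SimpleGraph.Walk.getVert_zero]

lemma no_two_gpar (hac : G.IsAcyclic) {a b : V} (hne : a ≠ b)
    (h1 : gpar G a = b) (h2 : gpar G b = a) : False := by
  have ha : a ≠ groot G a := nonroot_of_gpar G h1 hne
  have hb : b ≠ groot G b := nonroot_of_gpar G h2 hne.symm
  have d1 := (gpar_spec G hac ha).2.2
  have d2 := (gpar_spec G hac hb).2.2
  rw [h1] at d1; rw [h2] at d2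
  omega

end Orient

section Children
variable {V : Type*} [Fintype V] (G : SimpleGraph V) [DecidableRel G.Adj]
set_option linter.unusedSectionVars false

noncomputable def children (u : V) : Finset V :=
  letI := Classical.decEq V
  Finset.univ.filter (fun v => gpar G v = u ∧ v ≠ u)

lemma mem_children {u v : V} : v ∈ children G u ↔ gpar G v = u ∧ v ≠ u := by
  classical
  simp [children]

lemma children_nonroot {u v : V} (h : v ∈ children G u) : v ≠ groot G v := by
  rw [mem_children] at h
  exact nonroot_of_gpar G h.1 h.2

lemma children_subset_nbr (hac : G.IsAcyclic) (u : V) :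
    children G u ⊆ G.neighborFinset u := by
  intro v hv
  have hnr := children_nonroot G hv
  rw [mem_children] at hv
  rw [SimpleGraph.mem_neighborFinset]
  have := (gpar_spec G hac hnr).1
  rw [hv.1] at this
  exact this.symm

lemma card_children_le (hac : G.IsAcyclic) (hdeg : ∀ v, G.degree v ≤ 3) (u : V) :
    (children G u).card ≤ 3 := by
  have := Finset.card_le_card (children_subset_nbr G hac u)
  rw [SimpleGraph.card_neighborFinset_eq_degree] at this
  exact this.trans (hdeg u)

lemma card_children_le_two (hac : G.IsAcyclic) (hdeg : ∀ v, G.degree v ≤ 3)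
    {u : V} (hu : u ≠ groot G u) : (children G u).card ≤ 2 := by
  classical
  have hadj := (gpar_spec G hac hu).1
  have hmem : gpar G u ∈ G.neighborFinset u := by
    rw [SimpleGraph.mem_neighborFinset]; exact hadj
  have hnotch : gpar G u ∉ children G u := by
    rw [mem_children]
    rintro ⟨h1, h2⟩
    have hpu := (gpar_spec G hac hu).2.2
    have hnr2 : gpar G u ≠ groot G (gpar G u) := nonroot_of_gpar G h1 h2
    have hppu := (gpar_spec G hac hnr2).2.2
    rw [h1] at hppu
    omega
  have hsub : children G u ⊆ (G.neighborFinset u).erase (gpar G u) := by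
    intro v hv
    rw [Finset.mem_erase]
    refine ⟨?_, children_subset_nbr G hac u hv⟩
    intro he
    rw [he] at hv
    exact hnotch hv
  have := Finset.card_le_card hsub
  rw [Finset.card_erase_of_mem hmem, SimpleGraph.card_neighborFinset_eq_degree] at this
  have := this.trans (Nat.sub_le_sub_right (hdeg u) 1)
  omega

noncomputable def grank (v : V) : ℕ :=
  letI := Classical.decEq V
  ((children G (gpar G v)).filter
    (fun w => (Fintype.equivFin V w : ℕ) < (Fintype.equivFin V v : ℕ))).card

lemma grank_lt_card {v : V} (h : v ≠ groot G v) : grank G v < (children G (gpar G v)).card := by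
  classical
  have hv : v ∈ children G (gpar G v) := by
    rw [mem_children]
    exact ⟨rfl, (gpar_ne G h).symm⟩
  have hsub : ((children G (gpar G v)).filter
      (fun w => (Fintype.equivFin V w : ℕ) < (Fintype.equivFin V v : ℕ)))
      ⊆ (children G (gpar G v)).erase v := by
    intro w hw
    rw [Finset.mem_filter] at hw
    rw [Finset.mem_erase]
    refine ⟨?_, hw.1⟩
    rintro rfl
    omega
  have h1 := Finset.card_le_card hsub
  have h2 : ((children G (gpar G v)).erase v).card < (children G (gpar G v)).card :=
    Finset.card_erase_lt_of_mem hv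
  calc grank G v ≤ _ := h1
    _ < _ := h2

lemma grank_ne {u v w : V} (hv : v ∈ children G u) (hw : w ∈ children G u) (hne : v ≠ w) :
    grank G v ≠ grank G w := by
  classical
  have hpv : gpar G v = u := (mem_children G |>.mp hv).1
  have hpw : gpar G w = u := (mem_children G |>.mp hw).1
  have key : ∀ a b : V, a ∈ children G u → b ∈ children G u →
      (Fintype.equivFin V a : ℕ) < (Fintype.equivFin V b : ℕ) →
      grank G a < grank G b := by
    intro a b ha hb hab
    have hpa : gpar G a = u := (mem_children G |>.mp ha).1
    have hpb : gpar G b = u := (mem_children G |>.mp hb).1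
    unfold grank
    rw [hpa, hpb]
    apply Finset.card_lt_card
    constructor
    · intro x hx
      rw [Finset.mem_filter] at hx ⊢
      exact ⟨hx.1, hx.2.trans hab⟩
    · intro hsub
      have : a ∈ (children G u).filter
          (fun x => (Fintype.equivFin V x : ℕ) < (Fintype.equivFin V a : ℕ)) := by
        apply hsub
        rw [Finset.mem_filter]
        exact ⟨ha, hab⟩
      rw [Finset.mem_filter] at this
      omega
  have : (Fintype.equivFin V v : ℕ) ≠ (Fintype.equivFin V w : ℕ) := by
    intro he
    exact hne (Fintype.equivFin V |>.injective (Fin.ext he))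
  rcases Nat.lt_or_ge (Fintype.equivFin V v : ℕ) (Fintype.equivFin V w : ℕ) with hlt | hge
  · exact Nat.ne_of_lt (key v w hv hw hlt)
  · have : (Fintype.equivFin V w : ℕ) < (Fintype.equivFin V v : ℕ) := by omega
    exact (Nat.ne_of_lt (key w v hw hv this)).symm

end Children
section State
variable {V : Type*} [Fintype V] (G : SimpleGraph V) [DecidableRel G.Adj]
set_option linter.unusedSectionVars false

noncomputable def stateOf (hac : G.IsAcyclic) (v : V) : MSt :=
  letI := Classical.decEq V
  if h : v = groot G v then (0, none, [], false, [])
  else if gpar G v = groot G (gpar G v) then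
    rootSt (children G (gpar G v)).card (grank G v)
  else
    childSt (stateOf hac (gpar G v)) (grank G v == 1) ((children G (gpar G v)).card == 2)
termination_by gdepth G v
decreasing_by
  have := (gpar_spec G hac h).2.2
  omega

lemma stateOf_root_child (hac : G.IsAcyclic) {v : V} (h : v ≠ groot G v)
    (h2 : gpar G v = groot G (gpar G v)) :
    stateOf G hac v = rootSt (children G (gpar G v)).card (grank G v) := by
  rw [stateOf]
  rw [dif_neg h, if_pos h2]

lemma stateOf_child (hac : G.IsAcyclic) {v : V} (h : v ≠ groot G v)
    (h2 : gpar G v ≠ groot G (gpar G v)) :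
    stateOf G hac v
      = childSt (stateOf G hac (gpar G v)) (grank G v == 1) ((children G (gpar G v)).card == 2) := by
  rw [stateOf]
  rw [dif_neg h, if_neg h2]

lemma self_mem_children {v : V} (h : v ≠ groot G v) : v ∈ children G (gpar G v) := by
  rw [mem_children]
  exact ⟨rfl, (gpar_ne G h).symm⟩

lemma stateOf_mem_kids (hac : G.IsAcyclic) (hdeg : ∀ v, G.degree v ≤ 3) {v : V}
    (h : v ≠ groot G v) (h2 : gpar G v ≠ groot G (gpar G v)) :
    stateOf G hac v ∈ kids (stateOf G hac (gpar G v)) := by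
  rw [stateOf_child G hac h h2]
  by_cases hj : grank G v = 1
  · have hcard : (children G (gpar G v)).card = 2 := by
      have h1 := grank_lt_card G h
      have h2' := card_children_le_two G hac hdeg h2
      omega
    simp [kids, hj, hcard]
  · have hjf : (grank G v == 1) = false := by simp [hj]
    rw [hjf]
    by_cases hc : (children G (gpar G v)).card = 2
    · simp [kids, hc]
    · have : ((children G (gpar G v)).card == 2) = false := by simp [hc]
      rw [this]
      simp [kids]

lemma stateOf_mem_R (hac : G.IsAcyclic) (hdeg : ∀ v, G.degree v ≤ 3) :
    ∀ n (v : V), gdepth G v ≤ n → v ≠ groot G v → stateOf G hac v ∈ R := by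
  intro n
  induction n with
  | zero =>
    intro v hd h
    exact absurd ((gdepth_eq_zero G).mp (by omega)) h
  | succ n ih =>
    intro v hd h
    have hv : v ∈ children G (gpar G v) := self_mem_children G h
    have hk1 : 1 ≤ (children G (gpar G v)).card := Finset.card_pos.mpr ⟨v, hv⟩
    have hk3 : (children G (gpar G v)).card ≤ 3 := card_children_le G hac hdeg _
    have hr : grank G v < (children G (gpar G v)).card := grank_lt_card G h
    by_cases h2 : gpar G v = groot G (gpar G v)
    · rw [stateOf_root_child G hac h h2]
      have hmem := machine_roots ((children G (gpar G v)).card - 1)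
        (List.mem_range.mpr (by omega)) (grank G v) (List.mem_range.mpr (by omega))
      have hkk : (children G (gpar G v)).card - 1 + 1 = (children G (gpar G v)).card := by omega
      rwa [hkk] at hmem
    · have hdp := (gpar_spec G hac h).2.2
      have hpar : stateOf G hac (gpar G v) ∈ R := ih (gpar G v) (by omega) h2
      exact machine_closure _ hpar _ (stateOf_mem_kids G hac hdeg h h2)

lemma stateOf_in_R (hac : G.IsAcyclic) (hdeg : ∀ v, G.degree v ≤ 3) {v : V}
    (h : v ≠ groot G v) : stateOf G hac v ∈ R :=
  stateOf_mem_R G hac hdeg (gdepth G v) v le_rfl h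

lemma colN_lt (hac : G.IsAcyclic) (hdeg : ∀ v, G.degree v ≤ 3) {v : V}
    (h : v ≠ groot G v) : (stateOf G hac v).1 < 4 :=
  (machine_proper _ (stateOf_in_R G hac hdeg h)).2.2.2.2.2

lemma colN_ne_parent (hac : G.IsAcyclic) (hdeg : ∀ v, G.degree v ≤ 3) {v : V}
    (h : v ≠ groot G v) (h2 : gpar G v ≠ groot G (gpar G v)) :
    (stateOf G hac v).1 ≠ (stateOf G hac (gpar G v)).1 :=
  (machine_kids_ne _ (stateOf_in_R G hac hdeg h2) _ (stateOf_mem_kids G hac hdeg h h2)).1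

end State
section Siblings
variable {V : Type*} [Fintype V] (G : SimpleGraph V) [DecidableRel G.Adj]
set_option linter.unusedSectionVars false

lemma sibling_states (hac : G.IsAcyclic) (hdeg : ∀ v, G.degree v ≤ 3) {u a b : V}
    (ha : a ∈ children G u) (hb : b ∈ children G u) (hab : a ≠ b) :
    shapeBCok (stateOf G hac a, stateOf G hac b) = true := by
  classical
  have hpa : gpar G a = u := ((mem_children G).mp ha).1
  have hpb : gpar G b = u := ((mem_children G).mp hb).1
  have hna : a ≠ groot G a := children_nonroot G ha
  have hnb : b ≠ groot G b := children_nonroot G hb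
  have hk2 : 2 ≤ (children G u).card := by
    have : 1 < (children G u).card := Finset.one_lt_card.mpr ⟨a, ha, b, hb, hab⟩
    omega
  have hra : grank G a < (children G u).card := by
    have := grank_lt_card G hna; rwa [hpa] at this
  have hrb : grank G b < (children G u).card := by
    have := grank_lt_card G hnb; rwa [hpb] at this
  have hrne : grank G a ≠ grank G b := grank_ne G ha hb hab
  by_cases hu : u = groot G u
  · have h2a : gpar G a = groot G (gpar G a) := by rw [hpa]; exact hu
    have h2b : gpar G b = groot G (gpar G b) := by rw [hpb]; exact hu
    have hsa : stateOf G hac a = rootSt (children G u).card (grank G a) := by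
      rw [stateOf_root_child G hac hna h2a, hpa]
    have hsb : stateOf G hac b = rootSt (children G u).card (grank G b) := by
      rw [stateOf_root_child G hac hnb h2b, hpb]
    have hk3 : (children G u).card ≤ 3 := card_children_le G hac hdeg u
    apply machine_peaksRoot
    rw [hsa, hsb, peaksRoot, List.mem_flatMap]
    refine ⟨(children G u).card - 1, List.mem_range.mpr (by omega), ?_⟩
    rw [List.mem_flatMap]
    refine ⟨grank G a, List.mem_range.mpr (by omega), ?_⟩
    rw [List.mem_filterMap]
    refine ⟨grank G b, List.mem_range.mpr (by omega), ?_⟩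
    rw [if_pos hrne]
    have hkk : (children G u).card - 1 + 1 = (children G u).card := by omega
    rw [hkk]
  · have h2a : gpar G a ≠ groot G (gpar G a) := by rw [hpa]; exact hu
    have h2b : gpar G b ≠ groot G (gpar G b) := by rw [hpb]; exact hu
    have hcard : (children G u).card = 2 := by
      have := card_children_le_two G hac hdeg hu; omega
    have hsa : stateOf G hac a
        = childSt (stateOf G hac u) (grank G a == 1) true := by
      rw [stateOf_child G hac hna h2a, hpa, hcard]
      rfl
    have hsb : stateOf G hac b
        = childSt (stateOf G hac u) (grank G b == 1) true := by
      rw [stateOf_child G hac hnb h2b, hpb, hcard]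
      rfl
    have huR : stateOf G hac u ∈ R := stateOf_in_R G hac hdeg hu
    have hcases : grank G a = 0 ∧ grank G b = 1 ∨ grank G a = 1 ∧ grank G b = 0 := by
      rw [hcard] at hra hrb; omega
    apply machine_peaksInt (stateOf G hac u) huR
    rcases hcases with ⟨h1, h2⟩ | ⟨h1, h2⟩ <;>
      simp [peaksInt, hsa, hsb, h1, h2]

end Siblings
section Coloring
variable {V : Type*} [Fintype V] (G : SimpleGraph V) [DecidableRel G.Adj]
set_option linter.unusedSectionVars false

def fin4 (n : ℕ) : Fin 4 := ⟨n % 4, Nat.mod_lt _ (by norm_num)⟩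

lemma fin4_inj {m n : ℕ} (hm : m < 4) (hn : n < 4) (h : fin4 m = fin4 n) : m = n := by
  have := congrArg Fin.val h
  simpa [fin4, Nat.mod_eq_of_lt hm, Nat.mod_eq_of_lt hn] using this

noncomputable def ecol (hac : G.IsAcyclic) : Sym2 V → Fin 4 :=
  letI := Classical.decEq V
  Sym2.lift ⟨fun a b =>
    if gpar G a = b then fin4 (stateOf G hac a).1
    else if gpar G b = a then fin4 (stateOf G hac b).1 else 0,
    by
      classical
      intro a b
      by_cases h1 : gpar G a = b <;> by_cases h2 : gpar G b = a
      · by_cases hab : a = b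
        · subst hab; simp
        · exact (no_two_gpar G hac hab h1 h2).elim
      · simp [h1, h2]
      · simp [h1, h2]
      · simp [h1, h2]⟩

lemma ecol_eq (hac : G.IsAcyclic) {a b : V} (h : gpar G a = b) :
    ecol G hac s(a, b) = fin4 (stateOf G hac a).1 := by
  letI := Classical.decEq V
  simp only [ecol, Sym2.lift_mk]
  rw [if_pos h]

lemma ecol_eq' (hac : G.IsAcyclic) {a b : V} (h : gpar G b = a) (hne : a ≠ b) :
    ecol G hac s(a, b) = fin4 (stateOf G hac b).1 := by
  letI := Classical.decEq V
  simp only [ecol, Sym2.lift_mk]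
  rw [if_neg, if_pos h]
  intro hc
  exact no_two_gpar G hac hne hc h

lemma edge_rep (hac : G.IsAcyclic) {e : Sym2 V} (he : e ∈ G.edgeSet) :
    ∃ x, x ≠ groot G x ∧ e = s(x, gpar G x) := by
  induction e using Sym2.ind with
  | _ a b =>
    rw [SimpleGraph.mem_edgeSet] at he
    rcases orient G hac he with h | h
    · exact ⟨a, nonroot_of_gpar G h he.ne, by rw [h]⟩
    · exact ⟨b, nonroot_of_gpar G h he.ne', by rw [h, Sym2.eq_swap]⟩

lemma sibling_colN_ne (hac : G.IsAcyclic) (hdeg : ∀ v, G.degree v ≤ 3) {u a b : V}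
    (ha : a ∈ children G u) (hb : b ∈ children G u) (hab : a ≠ b) :
    (stateOf G hac a).1 ≠ (stateOf G hac b).1 := by
  classical
  have hpa : gpar G a = u := ((mem_children G).mp ha).1
  have hpb : gpar G b = u := ((mem_children G).mp hb).1
  have hna : a ≠ groot G a := children_nonroot G ha
  have hnb : b ≠ groot G b := children_nonroot G hb
  have hk2 : 2 ≤ (children G u).card := by
    have : 1 < (children G u).card := Finset.one_lt_card.mpr ⟨a, ha, b, hb, hab⟩
    omega
  have hra : grank G a < (children G u).card := by
    have := grank_lt_card G hna; rwa [hpa] at this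
  have hrb : grank G b < (children G u).card := by
    have := grank_lt_card G hnb; rwa [hpb] at this
  have hrne : grank G a ≠ grank G b := grank_ne G ha hb hab
  by_cases hu : u = groot G u
  · have h2a : gpar G a = groot G (gpar G a) := by rw [hpa]; exact hu
    have h2b : gpar G b = groot G (gpar G b) := by rw [hpb]; exact hu
    rw [stateOf_root_child G hac hna h2a, stateOf_root_child G hac hnb h2b]
    exact hrne
  · have h2a : gpar G a ≠ groot G (gpar G a) := by rw [hpa]; exact hu
    have h2b : gpar G b ≠ groot G (gpar G b) := by rw [hpb]; exact hu
    have hcard : (children G u).card = 2 := by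
      have := card_children_le_two G hac hdeg hu; omega
    have hsa : stateOf G hac a = childSt (stateOf G hac u) (grank G a == 1) true := by
      rw [stateOf_child G hac hna h2a, hpa, hcard]; rfl
    have hsb : stateOf G hac b = childSt (stateOf G hac u) (grank G b == 1) true := by
      rw [stateOf_child G hac hnb h2b, hpb, hcard]; rfl
    have huR : stateOf G hac u ∈ R := stateOf_in_R G hac hdeg hu
    have hprop := machine_proper _ huR
    have hcases : grank G a = 0 ∧ grank G b = 1 ∨ grank G a = 1 ∧ grank G b = 0 := by
      rw [hcard] at hra hrb; omega
    rcases hcases with ⟨h1, h2⟩ | ⟨h1, h2⟩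
    · simp only [hsa, hsb, h1, h2, childSt]
      simpa using hprop.1
    · simp only [hsa, hsb, h1, h2, childSt]
      simpa using Ne.symm hprop.1
end Coloring
section Proper
variable {V : Type*} [Fintype V] (G : SimpleGraph V) [DecidableRel G.Adj]
set_option linter.unusedSectionVars false

lemma colN_ne_parent' (hac : G.IsAcyclic) (hdeg : ∀ v, G.degree v ≤ 3) {v u : V}
    (h : gpar G v = u) (hne : v ≠ u) (hu : u ≠ groot G u) :
    (stateOf G hac v).1 ≠ (stateOf G hac u).1 := by
  have hnr : v ≠ groot G v := nonroot_of_gpar G h hne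
  have h2 : gpar G v ≠ groot G (gpar G v) := by rw [h]; exact hu
  have := colN_ne_parent G hac hdeg hnr h2
  rwa [h] at this

lemma ecol_proper (hac : G.IsAcyclic) (hdeg : ∀ v, G.degree v ≤ 3) :
    ∀ ⦃e f : Sym2 V⦄, e ∈ G.edgeSet → f ∈ G.edgeSet → e ≠ f →
      (∃ v, v ∈ e ∧ v ∈ f) → ecol G hac e ≠ ecol G hac f := by
  intro e f he hf hef hshare
  obtain ⟨x, hx, rfl⟩ := edge_rep G hac he
  obtain ⟨y, hy, rfl⟩ := edge_rep G hac hf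
  rw [ecol_eq G hac rfl, ecol_eq G hac rfl]
  intro hcol
  have hxy : (stateOf G hac x).1 = (stateOf G hac y).1 :=
    fin4_inj (colN_lt G hac hdeg hx) (colN_lt G hac hdeg hy) hcol
  have hxy_ne : x ≠ y := by rintro rfl; exact hef rfl
  obtain ⟨z, hz1, hz2⟩ := hshare
  rw [Sym2.mem_iff] at hz1 hz2
  have hgx : gpar G x ≠ x := gpar_ne G hx
  have hgy : gpar G y ≠ y := gpar_ne G hy
  rcases hz1 with h1 | h1
  all_goals rw [h1] at hz2
  · rcases hz2 with h | h
    · exact hxy_ne h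
    · -- x = gpar y : y child of x
      have : (stateOf G hac y).1 ≠ (stateOf G hac x).1 :=
        colN_ne_parent' G hac hdeg h.symm hxy_ne.symm hx
      exact this hxy.symm
  · rcases hz2 with h | h
    · -- gpar x = y
      exact colN_ne_parent' G hac hdeg h hxy_ne hy hxy
    · -- gpar x = gpar y : siblings
      have hxc : x ∈ children G (gpar G x) := self_mem_children G hx
      have hyc : y ∈ children G (gpar G x) := by
        rw [h]; exact self_mem_children G hy
      exact sibling_colN_ne G hac hdeg hxc hyc hxy_ne hxy

end Proper

section Shapes
variable {V : Type*} [Fintype V] (G : SimpleGraph V) [DecidableRel G.Adj]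
set_option linter.unusedSectionVars false

lemma kid_state (hac : G.IsAcyclic) (hdeg : ∀ v, G.degree v ≤ 3) {v u : V}
    (h : gpar G v = u) (hne : v ≠ u) (hu : u ≠ groot G u) :
    stateOf G hac v ∈ kids (stateOf G hac u) := by
  have hnr : v ≠ groot G v := nonroot_of_gpar G h hne
  have h2 : gpar G v ≠ groot G (gpar G v) := by rw [h]; exact hu
  have := stateOf_mem_kids G hac hdeg hnr h2
  rwa [h] at this

lemma shapeA_graph (hac : G.IsAcyclic) (hdeg : ∀ v, G.degree v ≤ 3) {w1 w2 w3 w4 : V}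
    (hn1 : w1 ≠ groot G w1)
    (h2 : gpar G w2 = w1) (h3 : gpar G w3 = w2) (h4 : gpar G w4 = w3)
    (n21 : w2 ≠ w1) (n32 : w3 ≠ w2) (n43 : w4 ≠ w3) :
    ¬((stateOf G hac w3).1 = (stateOf G hac w1).1 ∧
      (stateOf G hac w4).1 = (stateOf G hac w2).1) := by
  have hn2 : w2 ≠ groot G w2 := nonroot_of_gpar G h2 n21
  have hn3 : w3 ≠ groot G w3 := nonroot_of_gpar G h3 n32
  exact machine_shapeA _ (stateOf_in_R G hac hdeg hn1) _ (kid_state G hac hdeg h2 n21 hn1)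
    _ (kid_state G hac hdeg h3 n32 hn2) _ (kid_state G hac hdeg h4 n43 hn3)

lemma shapeB_graph (hac : G.IsAcyclic) (hdeg : ∀ v, G.degree v ≤ 3) {t a b z w : V}
    (ha : gpar G a = t) (hb : gpar G b = t) (hna : a ≠ t) (hnb : b ≠ t) (hab : a ≠ b)
    (hz : gpar G z = b) (hnz : z ≠ b) (hw : gpar G w = z) (hnw : w ≠ z) :
    ¬((stateOf G hac z).1 = (stateOf G hac a).1 ∧
      (stateOf G hac w).1 = (stateOf G hac b).1) := by
  have hca : a ∈ children G t := (mem_children G).mpr ⟨ha, hna⟩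
  have hcb : b ∈ children G t := (mem_children G).mpr ⟨hb, hnb⟩
  have hBC := sibling_states G hac hdeg hca hcb hab
  have hnrb : b ≠ groot G b := children_nonroot G hcb
  have hnrz : z ≠ groot G z := nonroot_of_gpar G hz hnz
  exact shapeBCok_b hBC (kid_state G hac hdeg hz hnz hnrb) (kid_state G hac hdeg hw hnw hnrz)

lemma shapeC_graph (hac : G.IsAcyclic) (hdeg : ∀ v, G.degree v ≤ 3) {t a b x y : V}
    (ha : gpar G a = t) (hb : gpar G b = t) (hna : a ≠ t) (hnb : b ≠ t) (hab : a ≠ b)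
    (hx : gpar G x = a) (hnx : x ≠ a) (hy : gpar G y = b) (hny : y ≠ b) :
    ¬((stateOf G hac x).1 = (stateOf G hac b).1 ∧
      (stateOf G hac y).1 = (stateOf G hac a).1) := by
  have hca : a ∈ children G t := (mem_children G).mpr ⟨ha, hna⟩
  have hcb : b ∈ children G t := (mem_children G).mpr ⟨hb, hnb⟩
  have hBC := sibling_states G hac hdeg hca hcb hab
  have hnra : a ≠ groot G a := children_nonroot G hca
  have hnrb : b ≠ groot G b := children_nonroot G hcb
  exact shapeBCok_c hBC (kid_state G hac hdeg hx hnx hnra) (kid_state G hac hdeg hy hny hnrb)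

end Shapes
section Star
variable {V : Type*} [Fintype V] (G : SimpleGraph V) [DecidableRel G.Adj]
set_option linter.unusedSectionVars false

lemma ecol_star (hac : G.IsAcyclic) (hdeg : ∀ v, G.degree v ≤ 3) :
    ∀ v0 v1 v2 v3 v4 : V, G.Adj v0 v1 → G.Adj v1 v2 → G.Adj v2 v3 → G.Adj v3 v4 →
      v0 ≠ v2 → v0 ≠ v3 → v1 ≠ v3 → v1 ≠ v4 → v2 ≠ v4 →
      ¬ (ecol G hac s(v0, v1) = ecol G hac s(v2, v3) ∧
         ecol G hac s(v1, v2) = ecol G hac s(v3, v4)) := by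
  intro v0 v1 v2 v3 v4 h01 h12 h23 h34 n02 n03 n13 n14 n24
  have inj : ∀ {x y : V}, x ≠ groot G x → y ≠ groot G y →
      fin4 (stateOf G hac x).1 = fin4 (stateOf G hac y).1 →
      (stateOf G hac x).1 = (stateOf G hac y).1 :=
    fun hx hy h => fin4_inj (colN_lt G hac hdeg hx) (colN_lt G hac hdeg hy) h
  by_cases h04 : v0 = v4
  · exfalso
    have h30 : G.Adj v3 v0 := by rw [h04]; exact h34
    have hp : (SimpleGraph.Walk.cons h12
        (SimpleGraph.Walk.cons h23 (SimpleGraph.Walk.cons h30 SimpleGraph.Walk.nil))).IsPath := by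
      rw [SimpleGraph.Walk.cons_isPath_iff, SimpleGraph.Walk.cons_isPath_iff,
        SimpleGraph.Walk.cons_isPath_iff]
      refine ⟨⟨⟨SimpleGraph.Walk.IsPath.nil, ?_⟩, ?_⟩, ?_⟩
      · simp only [SimpleGraph.Walk.support_nil, List.mem_singleton]
        exact fun h => n03 h.symm
      · simp only [SimpleGraph.Walk.support_cons, SimpleGraph.Walk.support_nil,
          List.mem_cons, List.mem_singleton, List.not_mem_nil, or_false]
        rintro (h | h)
        · exact h23.ne h
        · exact n24 (h.trans h04)
      · simp only [SimpleGraph.Walk.support_cons, SimpleGraph.Walk.support_nil,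
          List.mem_cons, List.mem_singleton, List.not_mem_nil, or_false]
        rintro (h | h | h)
        · exact h12.ne h
        · exact n13 h
        · exact n14 (h.trans h04)
    have hcyc : (SimpleGraph.Walk.cons h01 (SimpleGraph.Walk.cons h12
        (SimpleGraph.Walk.cons h23 (SimpleGraph.Walk.cons h30 SimpleGraph.Walk.nil)))).IsCycle := by
      rw [SimpleGraph.Walk.cons_isCycle_iff]
      refine ⟨hp, ?_⟩
      intro hmem
      simp only [SimpleGraph.Walk.edges_cons, SimpleGraph.Walk.edges_nil, List.mem_cons,
        List.not_mem_nil, or_false, Sym2.eq_iff] at hmem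
      rcases hmem with (⟨h1, h2⟩ | ⟨h1, h2⟩) | (⟨h1, h2⟩ | ⟨h1, h2⟩) | (⟨h1, h2⟩ | ⟨h1, h2⟩)
      · exact h01.ne h1
      · exact n02 h1
      · exact n02 h1
      · exact n03 h1
      · exact n03 h1
      · exact n13 h2
    exact hac _ hcyc
  rcases orient G hac h01 with o1 | o1 <;>
    rcases orient G hac h12 with o2 | o2 <;>
      rcases orient G hac h23 with o3 | o3 <;>
        rcases orient G hac h34 with o4 | o4
  -- 1 UUUU
  · rintro ⟨hA, hB⟩
    rw [ecol_eq G hac o1, ecol_eq G hac o3] at hA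
    rw [ecol_eq G hac o2, ecol_eq G hac o4] at hB
    have hr0 : v0 ≠ groot G v0 := nonroot_of_gpar G o1 h01.ne
    have hr1 : v1 ≠ groot G v1 := nonroot_of_gpar G o2 h12.ne
    have hr2 : v2 ≠ groot G v2 := nonroot_of_gpar G o3 h23.ne
    have hr3 : v3 ≠ groot G v3 := nonroot_of_gpar G o4 h34.ne
    exact shapeA_graph G hac hdeg hr3 o3 o2 o1 h23.ne h12.ne h01.ne
      ⟨inj hr1 hr3 hB, inj hr0 hr2 hA⟩
  -- 2 UUUD
  · rintro ⟨hA, hB⟩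
    rw [ecol_eq G hac o1, ecol_eq G hac o3] at hA
    rw [ecol_eq G hac o2, ecol_eq' G hac o4 h34.ne] at hB
    have hr0 : v0 ≠ groot G v0 := nonroot_of_gpar G o1 h01.ne
    have hr1 : v1 ≠ groot G v1 := nonroot_of_gpar G o2 h12.ne
    have hr2 : v2 ≠ groot G v2 := nonroot_of_gpar G o3 h23.ne
    have hr4 : v4 ≠ groot G v4 := nonroot_of_gpar G o4 h34.ne'
    exact shapeB_graph G hac hdeg o4 o3 h34.ne' h23.ne (Ne.symm n24) o2 h12.ne o1 h01.ne
      ⟨inj hr1 hr4 hB, inj hr0 hr2 hA⟩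
  -- 3 UUDU invalid
  · exact absurd (o3.symm.trans o4) n24
  -- 4 UUDD
  · rintro ⟨hA, hB⟩
    rw [ecol_eq G hac o1, ecol_eq' G hac o3 h23.ne] at hA
    rw [ecol_eq G hac o2, ecol_eq' G hac o4 h34.ne] at hB
    have hr0 : v0 ≠ groot G v0 := nonroot_of_gpar G o1 h01.ne
    have hr1 : v1 ≠ groot G v1 := nonroot_of_gpar G o2 h12.ne
    have hr3 : v3 ≠ groot G v3 := nonroot_of_gpar G o3 h23.ne'
    have hr4 : v4 ≠ groot G v4 := nonroot_of_gpar G o4 h34.ne'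
    exact shapeC_graph G hac hdeg o2 o3 h12.ne h23.ne' n13 o1 h01.ne o4 h34.ne'
      ⟨inj hr0 hr3 hA, (inj hr1 hr4 hB).symm⟩
  -- 5 UDUU invalid
  · exact absurd (o2.symm.trans o3) n13
  -- 6 UDUD invalid
  · exact absurd (o2.symm.trans o3) n13
  -- 7 UDDU invalid
  · exact absurd (o3.symm.trans o4) n24
  -- 8 UDDD
  · rintro ⟨hA, hB⟩
    rw [ecol_eq G hac o1, ecol_eq' G hac o3 h23.ne] at hA
    rw [ecol_eq' G hac o2 h12.ne, ecol_eq' G hac o4 h34.ne] at hB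
    have hr0 : v0 ≠ groot G v0 := nonroot_of_gpar G o1 h01.ne
    have hr2 : v2 ≠ groot G v2 := nonroot_of_gpar G o2 h12.ne'
    have hr3 : v3 ≠ groot G v3 := nonroot_of_gpar G o3 h23.ne'
    have hr4 : v4 ≠ groot G v4 := nonroot_of_gpar G o4 h34.ne'
    exact shapeB_graph G hac hdeg o1 o2 h01.ne h12.ne' n02 o3 h23.ne' o4 h34.ne'
      ⟨(inj hr0 hr3 hA).symm, (inj hr2 hr4 hB).symm⟩
  -- 9-12 D U ? ? invalid
  · exact absurd (o1.symm.trans o2) n02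
  · exact absurd (o1.symm.trans o2) n02
  · exact absurd (o1.symm.trans o2) n02
  · exact absurd (o1.symm.trans o2) n02
  -- 13 DDUU invalid
  · exact absurd (o2.symm.trans o3) n13
  -- 14 DDUD invalid
  · exact absurd (o2.symm.trans o3) n13
  -- 15 DDDU invalid
  · exact absurd (o3.symm.trans o4) n24
  -- 16 DDDD
  · rintro ⟨hA, hB⟩
    rw [ecol_eq' G hac o1 h01.ne, ecol_eq' G hac o3 h23.ne] at hA
    rw [ecol_eq' G hac o2 h12.ne, ecol_eq' G hac o4 h34.ne] at hB
    have hr1 : v1 ≠ groot G v1 := nonroot_of_gpar G o1 h01.ne'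
    have hr2 : v2 ≠ groot G v2 := nonroot_of_gpar G o2 h12.ne'
    have hr3 : v3 ≠ groot G v3 := nonroot_of_gpar G o3 h23.ne'
    have hr4 : v4 ≠ groot G v4 := nonroot_of_gpar G o4 h34.ne'
    exact shapeA_graph G hac hdeg hr1 o2 o3 o4 h12.ne' h23.ne' h34.ne'
      ⟨(inj hr1 hr3 hA).symm, (inj hr2 hr4 hB).symm⟩

end Star

theorem star_chromatic_index_subcubic_mad_lt_two {V : Type*} [Fintype V]
    (G : SimpleGraph V) [DecidableRel G.Adj]
    (hdeg : ∀ v, G.degree v ≤ 3)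
    (hmad : ∀ H : G.Subgraph, H.verts.Nonempty →
      (2 * H.edgeSet.ncard : ℚ) / H.verts.ncard < 2) :
    starChromaticIndex G ≤ 4 := by
  have hac : G.IsAcyclic := acyclic_of_mad G hmad
  apply Nat.sInf_le
  exact ⟨ecol G hac, ecol_proper G hac hdeg, ecol_star G hac hdeg⟩
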